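/- Let w : [0, T] → ℝ be Lipschitz with constant K > 0, and suppose w(τ) ≤ b for all τ ∈ [0,T] and w(T) ≤ −m, where b > 0 and m > 0. Then ∫₀ᵀ w(τ)dτ ≤ ∫₀ᵀ min{b, Kτ − m}dτ; explicitly, if T ≥ (b+m)/K then ∫₀ᵀ w(τ)dτ ≤ bT − (b+m)²/(2K), and if T < (b+m)/K then ∫₀ᵀ w(τ)dτ ≤ ½KT² − mT. In particular, if additionally T < (b+m)²/(Kb), then ∫₀ᵀ w(τ)dτ < bT/2. (The same bounds hold if instead w(0) ≤ −m, by time reversal.) -/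

import Mathlib

open Set intervalIntegral

lemma poly_int (K m a c : ℝ) :
    ∫ τ in a..c, (K * τ - m) = K * (c ^ 2 - a ^ 2) / 2 - m * (c - a) := by
  rw [intervalIntegral.integral_sub
      ((by fun_prop : Continuous fun τ : ℝ => K * τ).intervalIntegrable a c)
      (intervalIntegrable_const),
    intervalIntegral.integral_const_mul, integral_id, intervalIntegral.integral_const]
  simp [smul_eq_mul]
  ring

/-- The key integral estimate (Lemma `lem:5`, Cases 2–3): if `w` is `K`-Lipschitz on
`[0,T]`, `w ≤ b` on `[0,T]` and `w(T) ≤ -m` with `b, m > 0`, then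
`∫₀ᵀ w ≤ ∫₀ᵀ min{b, Kτ - m} dτ`; explicitly, `∫₀ᵀ w ≤ bT - (b+m)²/(2K)` when
`T ≥ (b+m)/K`, and `∫₀ᵀ w ≤ ½KT² - mT` when `T < (b+m)/K`. In particular, if
moreover `0 < T < (b+m)²/(Kb)`, then `∫₀ᵀ w < bT/2`. -/
theorem stmt_12 (w : ℝ → ℝ) (T K b m : ℝ)
    (hT : 0 ≤ T) (hK : 0 < K) (hb : 0 < b) (hm : 0 < m)
    (hLip : ∀ τ₁ ∈ Set.Icc 0 T, ∀ τ₂ ∈ Set.Icc 0 T, |w τ₁ - w τ₂| ≤ K * |τ₁ - τ₂|)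
    (hwb : ∀ τ ∈ Set.Icc 0 T, w τ ≤ b)
    (hwT : w T ≤ -m) :
    ((∫ τ in (0:ℝ)..T, w τ) ≤ ∫ τ in (0:ℝ)..T, min b (K * τ - m)) ∧
    ((b + m) / K ≤ T → (∫ τ in (0:ℝ)..T, w τ) ≤ b * T - (b + m) ^ 2 / (2 * K)) ∧
    (T < (b + m) / K → (∫ τ in (0:ℝ)..T, w τ) ≤ K * T ^ 2 / 2 - m * T) ∧
    (0 < T → T < (b + m) ^ 2 / (K * b) → (∫ τ in (0:ℝ)..T, w τ) < b * T / 2) := by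
  set s : ℝ := (b + m) / K with hs
  have hs0 : 0 < s := div_pos (by linarith) hK
  have hcont : ContinuousOn w (Icc 0 T) := by
    have : LipschitzOnWith (Real.toNNReal K) w (Icc 0 T) := by
      apply LipschitzOnWith.of_dist_le_mul
      intro x hx y hy
      rw [Real.dist_eq, Real.dist_eq]
      calc |w x - w y| ≤ K * |x - y| := hLip x hx y hy
        _ = Real.toNNReal K * |x - y| := by rw [Real.coe_toNNReal _ hK.le]
    exact this.continuousOn
  have hInt : IntervalIntegrable w MeasureTheory.volume 0 T :=
    hcont.intervalIntegrable_of_Icc hT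
  have hcg : Continuous fun τ => min b (K * (T - τ) - m) := by fun_prop
  have hcf : Continuous fun τ => min b (K * τ - m) := by fun_prop
  -- pointwise bound
  have hpt : ∀ τ ∈ Icc (0:ℝ) T, w τ ≤ min b (K * (T - τ) - m) := by
    intro τ hτ
    refine le_min (hwb τ hτ) ?_
    have h1 := hLip T (by simp [hT]) τ hτ
    have h2 : |T - τ| = T - τ := abs_of_nonneg (by linarith [hτ.2])
    rw [h2] at h1
    obtain ⟨hl, hr⟩ := abs_le.mp h1
    linarith
  have h1 : (∫ τ in (0:ℝ)..T, w τ) ≤ ∫ τ in (0:ℝ)..T, min b (K * (T - τ) - m) :=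
    intervalIntegral.integral_mono_on hT hInt (hcg.intervalIntegrable 0 T) hpt
  have hgf : (∫ τ in (0:ℝ)..T, min b (K * (T - τ) - m))
      = ∫ τ in (0:ℝ)..T, min b (K * τ - m) := by
    have := intervalIntegral.integral_comp_sub_left (a := (0:ℝ)) (b := T)
      (fun x => min b (K * x - m)) T
    simpa using this
  have hmain : (∫ τ in (0:ℝ)..T, w τ) ≤ ∫ τ in (0:ℝ)..T, min b (K * τ - m) :=
    hgf ▸ h1
  -- case T < s
  have hcase3 : T < s → (∫ τ in (0:ℝ)..T, w τ) ≤ K * T ^ 2 / 2 - m * T := by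
    intro _
    have : (∫ τ in (0:ℝ)..T, min b (K * τ - m)) ≤ ∫ τ in (0:ℝ)..T, (K * τ - m) := by
      apply intervalIntegral.integral_mono_on hT (hcf.intervalIntegrable 0 T) (((continuous_const.mul continuous_id').sub continuous_const).intervalIntegrable _ _)
      intro τ _; exact min_le_right _ _
    have hp := poly_int K m 0 T
    calc (∫ τ in (0:ℝ)..T, w τ) ≤ _ := hmain
      _ ≤ ∫ τ in (0:ℝ)..T, (K * τ - m) := this
      _ = K * T ^ 2 / 2 - m * T := by rw [hp]; ring
  -- case s ≤ T
  have hcase2 : s ≤ T → (∫ τ in (0:ℝ)..T, w τ) ≤ b * T - (b + m) ^ 2 / (2 * K) := by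
    intro hsT
    have hsplit : (∫ τ in (0:ℝ)..T, min b (K * τ - m))
        = (∫ τ in (0:ℝ)..s, min b (K * τ - m)) + ∫ τ in s..T, min b (K * τ - m) :=
      (intervalIntegral.integral_add_adjacent_intervals
        (hcf.intervalIntegrable 0 s) (hcf.intervalIntegrable s T)).symm
    have hA : (∫ τ in (0:ℝ)..s, min b (K * τ - m)) ≤ K * s ^ 2 / 2 - m * s := by
      have : (∫ τ in (0:ℝ)..s, min b (K * τ - m)) ≤ ∫ τ in (0:ℝ)..s, (K * τ - m) := by
        apply intervalIntegral.integral_mono_on hs0.le (hcf.intervalIntegrable 0 s)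
          (((continuous_const.mul continuous_id').sub continuous_const).intervalIntegrable _ _)
        intro τ _; exact min_le_right _ _
      have hp := poly_int K m 0 s
      calc (∫ τ in (0:ℝ)..s, min b (K * τ - m)) ≤ _ := this
        _ = K * s ^ 2 / 2 - m * s := by rw [hp]; ring
    have hB : (∫ τ in s..T, min b (K * τ - m)) ≤ b * (T - s) := by
      have : (∫ τ in s..T, min b (K * τ - m)) ≤ ∫ _τ in s..T, b := by
        apply intervalIntegral.integral_mono_on hsT (hcf.intervalIntegrable s T)
          (intervalIntegrable_const)
        intro τ _; exact min_le_left _ _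
      rw [intervalIntegral.integral_const, smul_eq_mul] at this
      linarith
    have hseq : K * s = b + m := by
      rw [hs]; field_simp
    have hfin : K * s ^ 2 / 2 - m * s + b * (T - s) = b * T - (b + m) ^ 2 / (2 * K) := by
      have hK' : (K:ℝ) ≠ 0 := hK.ne'
      rw [hs]; field_simp; ring
    linarith [hmain, hsplit ▸ (add_le_add hA hB)]
  refine ⟨hmain, hcase2, fun h => hcase3 h, ?_⟩
  intro hT0 hT1
  rcases lt_or_ge T s with h | h
  · have := hcase3 h
    have hKT : K * T < b + m := by
      rw [hs, lt_div_iff₀ hK] at h; linarith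
    nlinarith
  · have h0 := hcase2 h
    have h2 : T * (K * b) < (b + m) ^ 2 := by
      rw [lt_div_iff₀ (by positivity)] at hT1; exact hT1
    have h3 : b * T / 2 < (b + m) ^ 2 / (2 * K) := by
      rw [div_lt_div_iff₀ two_pos (by positivity)]; nlinarith
    linarith
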